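/- Let p be a probability distribution on a finite set S, let k ∈ (1,∞), and let q be a probability distribution with D_{f_k}(q||p) ≤ δ where δ ≤ p_min/(max{8,4k}·m²) for an integer m ≥ 1 and p_min = min{p(s) : p(s) > 0}. Then for every s with p(s) > 0, q(s) ≥ (1 - 1/(2m))·p(s). -/

import Mathlib

lemma bern0 {k t : ℝ} (hk : 1 < k) (ht : 0 ≤ t) : 0 ≤ t ^ k - k * t + k - 1 := by
  have h := one_add_mul_self_le_rpow_one_add (s := t - 1) (by linarith) hk.le
  rw [show (1 + (t-1)) = t by ring] at h
  linarith

lemma keyA {k t : ℝ} (hk : 2 ≤ k) (ht : 0 ≤ t) :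
    (1-t)^2 * (k*(k-1)) ≤ (t ^ k - k * t + k - 1) * k := by
  have hk1 : (0:ℝ) < k - 1 := by linarith
  rcases eq_or_lt_of_le ht with h0 | h0
  · rw [← h0, Real.zero_rpow (by positivity : k ≠ 0)]
    nlinarith
  · have am := Real.geom_mean_le_arith_mean2_weighted
      (w₁ := 1/(k-1)) (w₂ := (k-2)/(k-1)) (p₁ := t ^ k) (p₂ := t)
      (by positivity) (div_nonneg (by linarith) hk1.le) (Real.rpow_nonneg ht k) ht
      (by field_simp; ring)
    have hL : (t ^ k) ^ (1/(k-1)) * t ^ ((k-2)/(k-1)) = t ^ (2:ℕ) := by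
      rw [← Real.rpow_natCast t 2, ← Real.rpow_mul ht, ← Real.rpow_add h0]
      congr 1
      field_simp
      ring
    rw [hL] at am
    have h2 : t ^ (2:ℕ) * (k-1) ≤ t ^ k + (k-2) * t := by
      have := mul_le_mul_of_nonneg_right am hk1.le
      calc t ^ (2:ℕ) * (k-1) ≤ (1/(k-1) * t ^ k + (k-2)/(k-1) * t) * (k-1) := this
        _ = t ^ k + (k-2) * t := by field_simp
    nlinarith [h2]

lemma keyB {k : ℝ} (hk : 1 < k) (hk2 : k ≤ 2) {t : ℝ} (ht0 : 0 ≤ t) (ht1 : t ≤ 1) :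
    (1-t)^2 * (k*(k-1)) ≤ (t ^ k - k * t + k - 1) * 2 := by
  set F : ℝ → ℝ := fun x => x ^ k - k * x + (k - 1) - k*(k-1)/2*(1-x)^2 with hFdef
  have hderiv : ∀ x ∈ Set.Ioo (0:ℝ) 1, HasDerivAt F (k * x ^ (k-1) - k + k*(k-1)*(1-x)) x := by
    intro x hx
    have h1 : HasDerivAt (fun y : ℝ => y ^ k) (k * x ^ (k-1)) x :=
      Real.hasDerivAt_rpow_const (Or.inl hx.1.ne')
    have h2 : HasDerivAt (fun y : ℝ => 1 - y) (-1) x := by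
      simpa using (hasDerivAt_id x).const_sub 1
    have h3 : HasDerivAt (fun y : ℝ => k*(k-1)/2*(1-y)^2)
        (k*(k-1)/2 * (2*(1-x)^1 * (-1))) x := (h2.pow 2).const_mul _
    have h4 : HasDerivAt (fun y : ℝ => k * y) k x := by
      simpa using (hasDerivAt_id x).const_mul k
    have := ((h1.sub h4).add_const (k-1)).sub h3
    rw [show (k * x ^ (k-1) - k + k*(k-1)*(1-x)) = (k * x ^ (k - 1) - k - k * (k - 1) / 2 * (2 * (1 - x) ^ 1 * -1)) by ring]
    exact this
  have hcont : ContinuousOn F (Set.Icc 0 1) := by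
    apply ContinuousOn.sub
    · apply ContinuousOn.add
      · apply ContinuousOn.sub
        · exact fun x _ => (Real.continuousAt_rpow_const x k (Or.inr (by linarith))).continuousWithinAt
        · fun_prop
      · fun_prop
    · fun_prop
  have hanti : AntitoneOn F (Set.Icc 0 1) := by
    apply antitoneOn_of_deriv_nonpos (convex_Icc 0 1) hcont
    · intro x hx
      rw [interior_Icc] at hx
      exact (hderiv x hx).differentiableAt.differentiableWithinAt
    · intro x hx
      rw [interior_Icc] at hx
      rw [(hderiv x hx).deriv]
      have am := Real.geom_mean_le_arith_mean2_weighted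
        (w₁ := k-1) (w₂ := 2-k) (p₁ := x) (p₂ := 1)
        (by linarith) (by linarith) hx.1.le zero_le_one (by ring)
      rw [Real.one_rpow, mul_one, mul_one] at am
      nlinarith [am, hx.1.le]
  have hF1 : F 1 = 0 := by simp [hFdef, Real.one_rpow]
  have := hanti (Set.mem_Icc.mpr ⟨ht0, ht1⟩) (Set.mem_Icc.mpr ⟨zero_le_one, le_refl 1⟩) ht1
  rw [hF1] at this
  simp only [hFdef] at this
  linarith

lemma keymax {k t : ℝ} (hk : 1 < k) (ht0 : 0 ≤ t) (ht1 : t ≤ 1) :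
    (1-t)^2 * (k*(k-1)) ≤ (t ^ k - k * t + k - 1) * max 2 k := by
  rcases le_total k 2 with h | h
  · rw [max_eq_left h]; exact keyB hk h ht0 ht1
  · rw [max_eq_right h]; exact keyA h ht0

/-- If `D_{f_k}(q‖p) ≤ δ ≤ p_min/(max{8,4k} m²)` then `q(s) ≥ (1 - 1/(2m)) p(s)`
on the support of `p`, where `f_k(t) = (t^k - kt + k - 1)/(k(k-1))`. -/
theorem stmt_5 {S : Type*} [Fintype S] (p q : S → ℝ) (k pmin δ : ℝ) (m : ℕ)
    (hp0 : ∀ s, 0 ≤ p s) (hp1 : ∑ s, p s = 1)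
    (hq0 : ∀ s, 0 ≤ q s) (hq1 : ∑ s, q s = 1)
    (hk : 1 < k)
    (hpmin : IsLeast {x : ℝ | ∃ s, 0 < p s ∧ p s = x} pmin)
    (hm : 1 ≤ m)
    (hfk : ∑ s, ((q s / p s) ^ k - k * (q s / p s) + k - 1) / (k * (k - 1)) * p s ≤ δ)
    (hδ : δ ≤ pmin / (max 8 (4 * k) * (m : ℝ) ^ 2)) :
    ∀ s, 0 < p s → q s ≥ (1 - 1 / (2 * (m : ℝ))) * p s := by
  intro s hs
  by_contra hlt
  push_neg at hlt
  have hk0 : (0:ℝ) < k := by linarith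
  have hkk : (0:ℝ) < k * (k-1) := by nlinarith
  have hm1 : (1:ℝ) ≤ (m:ℝ) := by exact_mod_cast hm
  have hm0 : (0:ℝ) < (m:ℝ) := by linarith
  obtain ⟨⟨s₀, hs₀, hs₀e⟩, hlb⟩ := hpmin
  have hpmin0 : 0 < pmin := hs₀e ▸ hs₀
  have hpmins : pmin ≤ p s := hlb ⟨s, hs, rfl⟩
  set t := q s / p s with htdef
  have ht0 : 0 ≤ t := div_nonneg (hq0 s) (hp0 s)
  have ht1 : t < 1 - 1/(2*(m:ℝ)) := (div_lt_iff₀ hs).mpr (by linarith)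
  have hle1 : t ≤ 1 := by
    have : (0:ℝ) < 1/(2*(m:ℝ)) := by positivity
    linarith
  set F : ℝ := t ^ k - k * t + k - 1 with hFdef
  have hF0 : 0 ≤ F := bern0 hk ht0
  -- each term of the sum is nonnegative
  have hterm : ∀ u : S, 0 ≤ ((q u / p u) ^ k - k * (q u / p u) + k - 1) / (k * (k - 1)) * p u := by
    intro u
    exact mul_nonneg (div_nonneg (bern0 hk (div_nonneg (hq0 u) (hp0 u))) hkk.le) (hp0 u)
  have hsingle : (t ^ k - k * t + k - 1) / (k * (k - 1)) * p s ≤ δ :=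
    le_trans (Finset.single_le_sum (fun u _ => hterm u) (Finset.mem_univ s)) hfk
  rw [← hFdef] at hsingle
  have hsingle' : F * p s ≤ δ * (k * (k-1)) := by
    rw [div_mul_eq_mul_div, div_le_iff₀ hkk] at hsingle
    exact hsingle
  set c : ℝ := max 2 k with hcdef
  have hc2 : (2:ℝ) ≤ c := le_max_left _ _
  have hc0 : (0:ℝ) < c := by linarith
  have hmax8 : max 8 (4*k) = 4 * c := by
    rcases le_total k 2 with h | h
    · rw [hcdef, max_eq_left h, max_eq_left (by linarith)]; norm_num
    · rw [hcdef, max_eq_right h, max_eq_right (by linarith)]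
  have hX0 : (0:ℝ) < max 8 (4*k) * (m:ℝ)^2 := by
    rw [hmax8]; positivity
  have hδ' : δ * (4 * c * (m:ℝ)^2) ≤ pmin := by
    rw [← hmax8]
    have := (le_div_iff₀ hX0).mp hδ
    linarith
  have hkey : (1-t)^2 * (k*(k-1)) ≤ F * c := keymax hk ht0 hle1
  have hsq : 1 < (1-t)^2 * (4*(m:ℝ)^2) := by
    have h1 : 1/(2*(m:ℝ)) < 1 - t := by linarith
    have h2 : (0:ℝ) < 1/(2*(m:ℝ)) := by positivity
    have h3 : (1/(2*(m:ℝ)))^2 < (1-t)^2 := by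
      apply pow_lt_pow_left₀ h1 h2.le
      norm_num
    have h4 : (1/(2*(m:ℝ)))^2 * (4*(m:ℝ)^2) = 1 := by
      field_simp
      ring
    calc (1:ℝ) = (1/(2*(m:ℝ)))^2 * (4*(m:ℝ)^2) := h4.symm
      _ < (1-t)^2 * (4*(m:ℝ)^2) := by
          apply mul_lt_mul_of_pos_right h3
          positivity
  -- combine everything
  have hA : (1-t)^2 * (k*(k-1)) * pmin ≤ F * c * pmin :=
    mul_le_mul_of_nonneg_right hkey hpmin0.le
  have hB : F * c * pmin ≤ F * c * p s :=
    mul_le_mul_of_nonneg_left hpmins (mul_nonneg hF0 hc0.le)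
  have hC : F * p s * c ≤ δ * (k * (k-1)) * c :=
    mul_le_mul_of_nonneg_right hsingle' hc0.le
  have hD : δ * (4 * c * (m:ℝ)^2) * (k * (k-1)) ≤ pmin * (k * (k-1)) :=
    mul_le_mul_of_nonneg_right hδ' hkk.le
  have hE : (1-t)^2 * (k*(k-1)) * pmin ≤ δ * (k * (k-1)) * c :=
    calc (1-t)^2 * (k*(k-1)) * pmin ≤ F * c * pmin := hA
      _ ≤ F * c * p s := hB
      _ = F * p s * c := by ring
      _ ≤ δ * (k * (k-1)) * c := hC
  have hG : (1-t)^2 * (k*(k-1)) * pmin * (4*(m:ℝ)^2) ≤ pmin * (k*(k-1)) :=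
    calc (1-t)^2 * (k*(k-1)) * pmin * (4*(m:ℝ)^2)
        ≤ δ * (k * (k-1)) * c * (4*(m:ℝ)^2) :=
          mul_le_mul_of_nonneg_right hE (by positivity)
      _ = δ * (4 * c * (m:ℝ)^2) * (k*(k-1)) := by ring
      _ ≤ pmin * (k * (k-1)) := hD
  have hfin : pmin * (k*(k-1)) < (1-t)^2 * (k*(k-1)) * pmin * (4*(m:ℝ)^2) := by
    have h5 : pmin * (k*(k-1)) < (1-t)^2 * (4*(m:ℝ)^2) * (pmin * (k*(k-1))) :=
      (lt_mul_iff_one_lt_left (mul_pos hpmin0 hkk)).mpr hsq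
    calc pmin * (k*(k-1)) < (1-t)^2 * (4*(m:ℝ)^2) * (pmin * (k*(k-1))) := h5
      _ = (1-t)^2 * (k*(k-1)) * pmin * (4*(m:ℝ)^2) := by ring
  linarith
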